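/- arXiv:2310.20681 — 4 statements merged into one kernel-verified Lean document; each statement's English description precedes it below -/
import Mathlib

section
/- Mirsky's theorem (one direction, diagonal construction): given complex numbers λ₁,…,λₙ and a₁,…,aₙ with Σaᵢ = Σλᵢ, there exists an n×n complex matrix with eigenvalues λ₁,…,λₙ (counted with multiplicity) and diagonal entries a₁,…,aₙ. -/
open Polynomial Finset Matrix

variable {R : Type*} [CommRing R]

def hess (N : ℕ) (d cc : ℕ → R) : Matrix (Fin N) (Fin N) R :=
  fun i j =>
    if (i : ℕ) = j then d i
    else if (i : ℕ) + 1 = j then -1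
    else if (i : ℕ) = N - 1 then -(cc j) else 0

lemma hess_det (m : ℕ) : ∀ d cc : ℕ → R,
    (hess (m + 1) d cc).det =
      ∏ k ∈ range (m + 1), d k - ∑ j ∈ range m, cc j * ∏ k ∈ range j, d k := by
  induction m with
  | zero =>
    intro d cc
    rw [Matrix.det_fin_one]
    simp [hess]
  | succ m ih =>
    intro d cc
    rw [Matrix.det_succ_column_zero, Fin.sum_univ_succ]
    have hsub0 : (hess (m + 2) d cc).submatrix (Fin.succAbove 0) Fin.succ
        = hess (m + 1) (fun k => d (k + 1)) (fun k => cc (k + 1)) := by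
      ext i j
      have hi := i.isLt; have hj := j.isLt
      simp only [Matrix.submatrix_apply, Fin.zero_succAbove, hess, Fin.val_succ]
      split_ifs <;> simp_all <;> omega
    -- the tail sum: only the last index contributes
    have htail : ∀ i : Fin (m + 1),
        (-1 : R) ^ ((i.succ : Fin (m+2)) : ℕ) * hess (m + 2) d cc i.succ 0 *
          ((hess (m + 2) d cc).submatrix i.succ.succAbove Fin.succ).det =
        if i = Fin.last m then -(cc 0) else 0 := by
      intro i
      rcases eq_or_ne i (Fin.last m) with hi | hi
      · subst hi
        rw [if_pos rfl]
        have h2 : (Fin.last m).succ = Fin.last (m + 1) := rfl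
        have h1 : hess (m + 2) d cc (Fin.last (m + 1)) 0 = -(cc 0) := by
          have hv : ((Fin.last (m + 1) : Fin (m + 2)) : ℕ) = m + 1 := rfl
          simp only [hess, hv, Fin.val_zero]
          rw [if_neg (by omega), if_neg (by omega), if_pos (by omega)]
        have h3 : ((hess (m + 2) d cc).submatrix (Fin.last (m+1)).succAbove Fin.succ).det
            = (-1 : R) ^ (m + 1) := by
          have hLT : ((hess (m + 2) d cc).submatrix (Fin.last (m+1)).succAbove
              Fin.succ).BlockTriangular OrderDual.toDual := by
            intro i j hij
            have hij' : (i : ℕ) < j := hij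
            have hi := i.isLt; have hj := j.isLt
            simp only [Matrix.submatrix_apply, Fin.succAbove_last, hess,
              Fin.coe_castSucc, Fin.val_succ]
            rw [if_neg (by omega), if_neg (by omega), if_neg (by omega)]
          rw [Matrix.det_of_lowerTriangular _ hLT]
          have : ∀ i : Fin (m + 1),
              (hess (m + 2) d cc).submatrix (Fin.last (m+1)).succAbove Fin.succ i i
              = -1 := by
            intro i
            have hi := i.isLt
            simp only [Matrix.submatrix_apply, Fin.succAbove_last, hess,
              Fin.coe_castSucc, Fin.val_succ]
            rw [if_neg (by omega)]
            simp
          rw [Finset.prod_congr rfl fun i _ => this i]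
          simp
        rw [h2, h3, h1]
        have h4 : ((Fin.last (m+1) : Fin (m+2)) : ℕ) = m + 1 := rfl
        rw [h4]
        have he : ((-1 : R) ^ (m + 1)) * ((-1 : R) ^ (m + 1)) = 1 := by
          rw [← pow_add]; exact Even.neg_one_pow ⟨m + 1, by ring⟩
        linear_combination (-(cc 0)) * he
      · rw [if_neg hi]
        have h0 : hess (m + 2) d cc i.succ 0 = 0 := by
          have hi2 : (i : ℕ) < m := Fin.val_lt_last hi
          simp only [hess, Fin.val_succ, Fin.val_zero]
          split_ifs <;> simp_all <;> omega
        rw [h0]; ring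
    rw [Finset.sum_congr rfl fun i _ => htail i, Finset.sum_ite_eq' Finset.univ
      (Fin.last m) (fun _ => -(cc 0))]
    rw [if_pos (Finset.mem_univ _), hsub0, ih]
    have h00 : hess (m + 2) d cc 0 0 = d 0 := by simp [hess]
    rw [h00]
    rw [Finset.prod_range_succ' d, Finset.sum_range_succ' (fun j => cc j * ∏ k ∈ range j, d k)]
    simp only [Fin.val_zero, pow_zero, one_mul, Finset.range_zero, Finset.prod_empty, mul_one]
    have : ∀ j ∈ range m, cc (j + 1) * ∏ k ∈ range (j + 1), d k
        = d 0 * (cc (j + 1) * ∏ k ∈ range j, d (k + 1)) := by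
      intro j _
      rw [Finset.prod_range_succ' d]
      ring
    rw [Finset.sum_congr rfl this, ← Finset.mul_sum]
    ring

lemma exists_coeffs : ∀ (m : ℕ) (P : ℕ → ℂ[X]), (∀ k, (P k).Monic) →
    (∀ k, (P k).natDegree = k) → ∀ q : ℂ[X], q.degree < (m : ℕ) →
    ∃ cc : ℕ → ℂ, q = ∑ j ∈ Finset.range m, C (cc j) * P j := by
  intro m
  induction m with
  | zero =>
    intro P _ _ q hq
    refine ⟨fun _ => 0, ?_⟩
    simp only [Finset.range_zero, Finset.sum_empty]
    have : q.degree = ⊥ := by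
      exact Nat.WithBot.lt_zero_iff.mp (by exact_mod_cast hq)
    exact Polynomial.degree_eq_bot.mp this
  | succ m ih =>
    intro P hM hD q hq
    set d : ℂ := q.coeff m with hd
    set q' : ℂ[X] := q - C d * P m with hq'
    have hq'deg : q'.degree < (m : ℕ) := by
      rw [Polynomial.degree_lt_iff_coeff_zero]
      intro k hk
      have hk' : m ≤ k := by exact_mod_cast hk
      rcases eq_or_lt_of_le hk' with hkm | hkm
      · subst hkm
        simp only [hq', Polynomial.coeff_sub, Polynomial.coeff_C_mul]
        have hone : (P m).coeff m = 1 := by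
          have hm := (hM m).coeff_natDegree
          rwa [hD m] at hm
        rw [hone, mul_one, ← hd]; ring
      · simp only [hq', Polynomial.coeff_sub, Polynomial.coeff_C_mul]
        have h1 : q.coeff k = 0 := by
          apply Polynomial.coeff_eq_zero_of_degree_lt
          exact lt_of_lt_of_le hq (by exact_mod_cast hkm)
        have h2 : (P m).coeff k = 0 := by
          apply Polynomial.coeff_eq_zero_of_natDegree_lt
          rw [hD m]; exact hkm
        rw [h1, h2, mul_zero, sub_zero]
    obtain ⟨cc', hcc'⟩ := ih P hM hD q' hq'deg
    refine ⟨fun j => if j = m then d else cc' j, ?_⟩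
    rw [Finset.sum_range_succ]
    have : ∑ j ∈ Finset.range m, C (if j = m then d else cc' j) * P j
        = ∑ j ∈ Finset.range m, C (cc' j) * P j := by
      apply Finset.sum_congr rfl
      intro j hj
      rw [if_neg (Nat.ne_of_lt (Finset.mem_range.mp hj))]
    rw [this, ← hcc']
    show q = q' + C (if m = m then d else cc' m) * P m
    rw [if_pos rfl, hq']
    ring

theorem mirsky_existence (n : ℕ) (hn : 1 ≤ n) (lam a : Fin n → ℂ)
    (h : ∑ i, a i = ∑ i, lam i) :
    ∃ A : Matrix (Fin n) (Fin n) ℂ,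
      A.charpoly = ∏ i, (X - C (lam i)) ∧ ∀ i, A i i = a i := by
  obtain ⟨m, rfl⟩ : ∃ m, n = m + 1 := ⟨n - 1, by omega⟩
  set a' : ℕ → ℂ := fun k => if h : k < m + 1 then a ⟨k, h⟩ else 0 with ha'
  set lam' : ℕ → ℂ := fun k => if h : k < m + 1 then lam ⟨k, h⟩ else 0 with hlam'
  have ha'eq : ∀ i : Fin (m + 1), a' (i : ℕ) = a i := by
    intro i; simp [ha', i.isLt]; exact fun h => absurd i.isLt (by omega)
  have hlam'eq : ∀ i : Fin (m + 1), lam' (i : ℕ) = lam i := by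
    intro i; simp [hlam', i.isLt]; exact fun h => absurd i.isLt (by omega)
  set P : ℕ → ℂ[X] := fun j => ∏ k ∈ Finset.range j, (X - C (a' k)) with hP
  have hPM : ∀ k, (P k).Monic := fun k =>
    monic_prod_of_monic _ _ fun i _ => monic_X_sub_C _
  have hPD : ∀ k, (P k).natDegree = k := by
    intro k
    rw [hP]
    rw [Polynomial.natDegree_prod_of_monic _ _ fun i _ => monic_X_sub_C _]
    simp [Polynomial.natDegree_X_sub_C]
  -- the two big monic products
  set pa : ℂ[X] := ∏ k ∈ Finset.range (m + 1), (X - C (a' k)) with hpa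
  set pl : ℂ[X] := ∏ k ∈ Finset.range (m + 1), (X - C (lam' k)) with hpl
  have hpaM : pa.Monic := monic_prod_of_monic _ _ fun i _ => monic_X_sub_C _
  have hplM : pl.Monic := monic_prod_of_monic _ _ fun i _ => monic_X_sub_C _
  have hpaD : pa.natDegree = m + 1 := hPD (m + 1)
  have hplD : pl.natDegree = m + 1 := by
    rw [hpl, Polynomial.natDegree_prod_of_monic _ _ fun i _ => monic_X_sub_C _]
    simp [Polynomial.natDegree_X_sub_C]
  have hsum : ∑ k ∈ Finset.range (m + 1), a' k = ∑ k ∈ Finset.range (m + 1), lam' k := by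
    rw [← Fin.sum_univ_eq_sum_range, ← Fin.sum_univ_eq_sum_range]
    rw [Finset.sum_congr rfl fun i _ => ha'eq i, Finset.sum_congr rfl fun i _ => hlam'eq i]
    exact h
  set q : ℂ[X] := pa - pl with hq
  have hqdeg : q.degree < (m : ℕ) := by
    rw [Polynomial.degree_lt_iff_coeff_zero]
    intro k hk
    have hk' : m ≤ k := by exact_mod_cast hk
    simp only [hq, Polynomial.coeff_sub]
    rcases eq_or_lt_of_le hk' with hkm | hkm
    · -- k = m : next coefficients agree
      subst hkm
      have h1 : pa.coeff m = -∑ k ∈ Finset.range (m + 1), a' k := by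
        have := Polynomial.prod_X_sub_C_nextCoeff (s := Finset.range (m + 1)) a'
        rw [Polynomial.nextCoeff, if_neg (by rw [hpaD]; omega), hpaD] at this
        simpa using this
      have h2 : pl.coeff m = -∑ k ∈ Finset.range (m + 1), lam' k := by
        have := Polynomial.prod_X_sub_C_nextCoeff (s := Finset.range (m + 1)) lam'
        rw [Polynomial.nextCoeff, if_neg (by rw [hplD]; omega), hplD] at this
        simpa using this
      rw [h1, h2, hsum]; ring
    · -- k > m
      rcases eq_or_lt_of_le (Nat.succ_le_of_lt hkm) with hkm1 | hkm1
      · have e1 : pa.coeff (m + 1) = 1 := by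
          have := hpaM.coeff_natDegree; rwa [hpaD] at this
        have e2 : pl.coeff (m + 1) = 1 := by
          have := hplM.coeff_natDegree; rwa [hplD] at this
        rw [← hkm1, e1, e2]; ring
      · rw [Polynomial.coeff_eq_zero_of_natDegree_lt (by rw [hpaD]; omega),
          Polynomial.coeff_eq_zero_of_natDegree_lt (by rw [hplD]; omega)]; ring
  obtain ⟨cc, hcc⟩ := exists_coeffs m P hPM hPD q hqdeg
  refine ⟨fun i j =>
    if (i : ℕ) = j then a i else if (i : ℕ) + 1 = j then 1
    else if (i : ℕ) = m then cc j else 0, ?_, ?_⟩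
  · have hch : charmatrix (fun i j : Fin (m + 1) =>
        if (i : ℕ) = j then a i else if (i : ℕ) + 1 = j then (1 : ℂ)
        else if (i : ℕ) = m then cc j else 0)
        = hess (m + 1) (fun k => X - C (a' k)) (fun j => C (cc j)) := by
      ext i j : 1
      rcases eq_or_ne i j with rfl | hij
      · erw [charmatrix_apply_eq]
        simp [hess, ha'eq i]
      · erw [charmatrix_apply_ne _ _ _ hij]
        have hvij : (i : ℕ) ≠ j := fun hv => hij (Fin.ext hv)
        simp only [hess, Nat.add_sub_cancel, if_neg hvij]
        split_ifs <;> simp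
    unfold Matrix.charpoly; rw [hch, hess_det]
    have hrw : ∑ j ∈ Finset.range m, C (cc j) * ∏ k ∈ Finset.range j, (X - C (a' k)) = q :=
      hcc.symm
    rw [hrw, hq]
    have : pa - (pa - pl) = pl := by ring
    rw [this, hpl, ← Fin.prod_univ_eq_prod_range]
    exact Finset.prod_congr rfl fun i _ => by rw [hlam'eq i]
  · intro i
    simp
end

section
/- For the μ-τ reflection symmetric mixing matrix in the standard PMNS parametrization, the condition |U_{μi}| = |U_{τi}| for all i = 1,2,3 with s₁₃ ≠ 0 and all angles in (0,π/2) forces θ₂₃ = π/4 and cos δ_CP = 0. -/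
theorem mutau_reflection_maximal (θ12 θ13 θ23 δ : ℝ)
    (hs12 : 0 < Real.sin θ12) (hc12 : 0 < Real.cos θ12)
    (hs13 : 0 < Real.sin θ13) (hc13 : 0 < Real.cos θ13)
    (hs23 : 0 < Real.sin θ23) (hc23 : 0 < Real.cos θ23)
    (h1 : ‖-(Real.sin θ12 * Real.cos θ23 : ℝ) -
            (Real.cos θ12 * Real.sin θ23 * Real.sin θ13 : ℝ) * Complex.exp ((δ : ℂ) * Complex.I)‖ =
          ‖(Real.sin θ12 * Real.sin θ23 : ℝ) -
            (Real.cos θ12 * Real.cos θ23 * Real.sin θ13 : ℝ) * Complex.exp ((δ : ℂ) * Complex.I)‖)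
    (h2 : ‖(Real.cos θ12 * Real.cos θ23 : ℝ) -
            (Real.sin θ12 * Real.sin θ23 * Real.sin θ13 : ℝ) * Complex.exp ((δ : ℂ) * Complex.I)‖ =
          ‖-(Real.cos θ12 * Real.sin θ23 : ℝ) -
            (Real.sin θ12 * Real.cos θ23 * Real.sin θ13 : ℝ) * Complex.exp ((δ : ℂ) * Complex.I)‖)
    (h3 : ‖((Real.sin θ23 * Real.cos θ13 : ℝ) : ℂ)‖ =
          ‖((Real.cos θ23 * Real.cos θ13 : ℝ) : ℂ)‖) :
    Real.sin θ23 = Real.cos θ23 ∧ Real.cos δ = 0 := by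
  have hre : (Complex.exp ((δ : ℂ) * Complex.I)).re = Real.cos δ :=
    Complex.exp_ofReal_mul_I_re δ
  have him : (Complex.exp ((δ : ℂ) * Complex.I)).im = Real.sin δ :=
    Complex.exp_ofReal_mul_I_im δ
  have h23 : Real.sin θ23 = Real.cos θ23 := by
    rw [Complex.norm_real, Complex.norm_real, Real.norm_eq_abs, Real.norm_eq_abs,
      abs_of_pos (mul_pos hs23 hc13), abs_of_pos (mul_pos hc23 hc13)] at h3
    exact mul_right_cancel₀ (ne_of_gt hc13) h3
  refine ⟨h23, ?_⟩
  have e1 := congrArg (fun x => x ^ 2) h1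
  simp only [Complex.sq_norm, Complex.normSq_apply, Complex.sub_re, Complex.sub_im,
    Complex.mul_re, Complex.mul_im, Complex.ofReal_re, Complex.ofReal_im,
    Complex.neg_re, Complex.neg_im, hre, him] at e1
  rw [h23] at e1
  have hpos : 0 < Real.sin θ12 * Real.cos θ12 * (Real.cos θ23 * Real.cos θ23) * Real.sin θ13 :=
    mul_pos (mul_pos (mul_pos hs12 hc12) (mul_pos hc23 hc23)) hs13
  have key : Real.cos δ * (4 * (Real.sin θ12 * Real.cos θ12 * (Real.cos θ23 * Real.cos θ23) * Real.sin θ13)) = 0 := by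
    linear_combination e1
  have := mul_eq_zero.mp key
  rcases this with h | h
  · exact h
  · nlinarith
end

section
/- Partial μ-τ reflection symmetry in the first column: the condition |U_{μ1}| = |U_{τ1}| in the standard PMNS parametrization is equivalent to cos δ_CP = (c₂₃² - s₂₃²)(c₁₂²s₁₃² - s₁₂²) / (4 c₁₂ s₁₂ c₂₃ s₂₃ s₁₃), provided the denominator is nonzero. -/
lemma abs_sq_key (a b δ : ℝ) :
    ‖((a : ℂ) + (b : ℂ) * Complex.exp ((δ : ℂ) * Complex.I))‖ ^ 2 =
      a ^ 2 + b ^ 2 + 2 * a * b * Real.cos δ := by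
  rw [Complex.sq_norm, Complex.exp_mul_I, Complex.normSq_apply]
  simp [Complex.cos_ofReal_re, Complex.sin_ofReal_re]
  have h := Real.sin_sq_add_cos_sq δ
  ring_nf
  nlinarith [Real.sin_sq_add_cos_sq δ]

theorem partial_mutau_first_column (θ12 θ13 θ23 δ : ℝ)
    (hne : Real.cos θ12 * Real.sin θ12 * Real.cos θ23 * Real.sin θ23 * Real.sin θ13 ≠ 0) :
    ‖(-(Real.sin θ12 * Real.cos θ23 : ℝ) -
        (Real.cos θ12 * Real.sin θ23 * Real.sin θ13 : ℝ) * Complex.exp ((δ : ℂ) * Complex.I) : ℂ)‖ ^ 2 =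
      ‖((Real.sin θ12 * Real.sin θ23 : ℝ) -
        (Real.cos θ12 * Real.cos θ23 * Real.sin θ13 : ℝ) * Complex.exp ((δ : ℂ) * Complex.I) : ℂ)‖ ^ 2 ↔
    Real.cos δ =
      (Real.cos θ23 ^ 2 - Real.sin θ23 ^ 2) *
          (Real.cos θ12 ^ 2 * Real.sin θ13 ^ 2 - Real.sin θ12 ^ 2) /
        (4 * Real.cos θ12 * Real.sin θ12 * Real.cos θ23 * Real.sin θ23 * Real.sin θ13) := by
  set c12 := Real.cos θ12
  set s12 := Real.sin θ12
  set c23 := Real.cos θ23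
  set s23 := Real.sin θ23
  set s13 := Real.sin θ13
  have h1 : (-(s12 * c23 : ℝ) - (c12 * s23 * s13 : ℝ) * Complex.exp ((δ : ℂ) * Complex.I))
      = ((-(s12 * c23) : ℝ) : ℂ) + ((-(c12 * s23 * s13) : ℝ) : ℂ) * Complex.exp ((δ : ℂ) * Complex.I) := by
    push_cast; ring
  have h2 : ((s12 * s23 : ℝ) - (c12 * c23 * s13 : ℝ) * Complex.exp ((δ : ℂ) * Complex.I))
      = ((s12 * s23 : ℝ) : ℂ) + ((-(c12 * c23 * s13) : ℝ) : ℂ) * Complex.exp ((δ : ℂ) * Complex.I) := by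
    push_cast; ring
  rw [h1, h2, abs_sq_key, abs_sq_key]
  have hD : (4 * c12 * s12 * c23 * s23 * s13) ≠ 0 := by
    intro h; apply hne; nlinarith [h]
  rw [eq_div_iff hD]
  constructor <;> intro h <;> nlinarith [h]
end

section
/- For the TM₁ mixing matrix U_TM₁ = U_TBM · R₂₃(θ,γ), the Jarlskog invariant J = Im(U₁₁ U₂₂ U₁₂* U₂₁*) equals -(1/(6√6))·sin 2θ·sin γ. -/
open Matrix
noncomputable def U_TBM : Matrix (Fin 3) (Fin 3) ℂ :=
  !![(Real.sqrt (2/3) : ℂ), (1/Real.sqrt 3 : ℝ), 0;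
     (-(1/Real.sqrt 6) : ℝ), (1/Real.sqrt 3 : ℝ), (-(1/Real.sqrt 2) : ℝ);
     (-(1/Real.sqrt 6) : ℝ), (1/Real.sqrt 3 : ℝ), (1/Real.sqrt 2 : ℝ)]

noncomputable def R23 (θ γ : ℝ) : Matrix (Fin 3) (Fin 3) ℂ :=
  !![1, 0, 0;
     0, (Real.cos θ : ℂ), (Real.sin θ : ℂ) * Complex.exp (-(γ : ℂ) * Complex.I);
     0, -(Real.sin θ : ℂ) * Complex.exp ((γ : ℂ) * Complex.I), (Real.cos θ : ℂ)]

theorem TM1_jarlskog (θ γ : ℝ) :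
    ((U_TBM * R23 θ γ) 0 0 * (U_TBM * R23 θ γ) 1 1 *
      starRingEnd ℂ ((U_TBM * R23 θ γ) 0 1) *
      starRingEnd ℂ ((U_TBM * R23 θ γ) 1 0)).im =
    -(Real.sin (2 * θ) * Real.sin γ) / (6 * Real.sqrt 6) := by
  have hE : Complex.exp ((γ : ℂ) * Complex.I) =
      (Real.cos γ : ℂ) + (Real.sin γ : ℂ) * Complex.I := by
    rw [Complex.exp_mul_I]; norm_cast
  have h00 : (U_TBM * R23 θ γ) 0 0 = (Real.sqrt (2/3) : ℂ) := by
    simp [U_TBM, R23, Matrix.mul_apply, Fin.sum_univ_three, Matrix.vecHead, Matrix.vecTail]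
  have h01 : (U_TBM * R23 θ γ) 0 1 = ((1/Real.sqrt 3 * Real.cos θ : ℝ) : ℂ) := by
    simp [U_TBM, R23, Matrix.mul_apply, Fin.sum_univ_three, Matrix.vecHead, Matrix.vecTail]
  have h10 : (U_TBM * R23 θ γ) 1 0 = ((-(1/Real.sqrt 6) : ℝ) : ℂ) := by
    simp [U_TBM, R23, Matrix.mul_apply, Fin.sum_univ_three, Matrix.vecHead, Matrix.vecTail]
  have h11 : (U_TBM * R23 θ γ) 1 1 =
      ((1/Real.sqrt 3 * Real.cos θ + 1/Real.sqrt 2 * Real.sin θ * Real.cos γ : ℝ) : ℂ)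
      + ((1/Real.sqrt 2 * Real.sin θ * Real.sin γ : ℝ) : ℂ) * Complex.I := by
    simp [U_TBM, R23, Matrix.mul_apply, Fin.sum_univ_three, Matrix.vecHead, Matrix.vecTail, hE]
    ring
  rw [h00, h01, h10, h11]
  simp only [Complex.conj_ofReal]
  rw [show ((Real.sqrt (2/3) : ℂ) * (((1/Real.sqrt 3 * Real.cos θ + 1/Real.sqrt 2 * Real.sin θ * Real.cos γ : ℝ) : ℂ)
      + ((1/Real.sqrt 2 * Real.sin θ * Real.sin γ : ℝ) : ℂ) * Complex.I) *
      ((1/Real.sqrt 3 * Real.cos θ : ℝ) : ℂ) * ((-(1/Real.sqrt 6) : ℝ) : ℂ)) =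
      ((Real.sqrt (2/3) * (1/Real.sqrt 3 * Real.cos θ + 1/Real.sqrt 2 * Real.sin θ * Real.cos γ) * (1/Real.sqrt 3 * Real.cos θ) * (-(1/Real.sqrt 6)) : ℝ) : ℂ)
      + ((Real.sqrt (2/3) * (1/Real.sqrt 2 * Real.sin θ * Real.sin γ) * (1/Real.sqrt 3 * Real.cos θ) * (-(1/Real.sqrt 6)) : ℝ) : ℂ) * Complex.I from by push_cast; ring]
  simp only [Complex.add_im, Complex.ofReal_im, Complex.mul_im, Complex.ofReal_re, Complex.I_im,
    Complex.I_re, mul_zero, mul_one, zero_add, zero_mul, add_zero]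
  -- now a real equation
  have h2 : Real.sqrt 2 > 0 := Real.sqrt_pos.mpr (by norm_num)
  have h3 : Real.sqrt 3 > 0 := Real.sqrt_pos.mpr (by norm_num)
  have h6 : Real.sqrt 6 = Real.sqrt 2 * Real.sqrt 3 := by
    rw [← Real.sqrt_mul (by norm_num)]; norm_num
  have h23 : Real.sqrt (2/3) = Real.sqrt 2 / Real.sqrt 3 := by
    rw [Real.sqrt_div (by norm_num : (0:ℝ) ≤ 2)]
  have h22 : Real.sqrt 2 * Real.sqrt 2 = 2 := Real.mul_self_sqrt (by norm_num)
  have h33 : Real.sqrt 3 * Real.sqrt 3 = 3 := Real.mul_self_sqrt (by norm_num)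
  rw [Real.sin_two_mul, h23, h6]
  field_simp
  ring_nf
  rw [show Real.sqrt 3 ^ 2 = 3 from Real.sq_sqrt (by norm_num)]
  ring
end
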